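/- Let z_{k−1} < z_k < z_{k+1} be real numbers and r_{k−1}, r_k, r_{k+1} > 0 with (z_k − z_{k−1})² = 4 r_{k−1} r_k and (z_{k+1} − z_k)² = 4 r_k r_{k+1} (so the circles tangent to the real axis at these points with these radii, lying in the upper half-plane, are consecutively externally tangent). Let w_{k−1} = ((r_k z_{k−1} + r_{k−1} z_k) + 2 i r_{k−1} r_k)/(r_{k−1} + r_k) and w_k = ((r_{k+1} z_k + r_k z_{k+1}) + 2 i r_k r_{k+1})/(r_k + r_{k+1}) be the tangency points of the consecutive circles, regarded as complex numbers. Then the cross-ratio s_k := q(z_k, z_{k−1}, w_{k−1}, w_k) is purely imaginary with negative imaginary part (in particular Re(s_k) = 0 and s_k ≠ 0). -/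

import Mathlib

set_option maxHeartbeats 1000000

open Complex in
/-- The He–Schramm cross-ratio `s_k = q(z_k, z_{k-1}, w_{k-1}, w_k)` of three
consecutive mutually tangent circles of a flower (normalized so that the center
circle is the real line) is purely imaginary with negative imaginary part. -/
theorem crossRatio_purely_imaginary
    (zkm zk zkp : ℝ) (h1 : zkm < zk) (h2 : zk < zkp)
    (rkm rk rkp : ℝ) (hrkm : 0 < rkm) (hrk : 0 < rk) (hrkp : 0 < rkp)
    (ht1 : (zk - zkm) ^ 2 = 4 * rkm * rk)
    (ht2 : (zkp - zk) ^ 2 = 4 * rk * rkp)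
    (wkm wk : ℂ)
    (hwkm : wkm = (((rk : ℂ) * zkm + (rkm : ℂ) * zk) + 2 * I * rkm * rk) /
        ((rkm : ℂ) + rk))
    (hwk : wk = (((rkp : ℂ) * zk + (rk : ℂ) * zkp) + 2 * I * rk * rkp) /
        ((rk : ℂ) + rkp))
    (s : ℂ)
    (hs : s = (((zk : ℂ) - zkm) * (wkm - wk)) / (((zkm : ℂ) - wkm) * (wk - zk))) :
    s.re = 0 ∧ s.im < 0 ∧ s ≠ 0 := by
  have hrk' : (rk : ℝ) ≠ 0 := hrk.ne'
  have hrkC : (rk : ℂ) ≠ 0 := by exact_mod_cast hrk'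
  have ha : (0:ℝ) < zk - zkm := by linarith
  have hb : (0:ℝ) < zkp - zk := by linarith
  have hc : (0:ℝ) < zkp - zkm := by linarith
  have hac : ((zk:ℂ) - zkm) ≠ 0 := by
    have : ((zk:ℝ) - zkm) ≠ 0 := ha.ne'
    exact_mod_cast this
  have hbc : ((zkp:ℂ) - zk) ≠ 0 := by
    have : ((zkp:ℝ) - zk) ≠ 0 := hb.ne'
    exact_mod_cast this
  set t : ℝ := 2 * rk * (zkp - zkm) / ((zk - zkm) * (zkp - zk)) with hT
  have htpos : 0 < t := by positivity
  have hABr : (0:ℝ) < rkm + rk := by linarith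
  have hBBr : (0:ℝ) < rk + rkp := by linarith
  have hABc : ((rkm:ℂ) + rk) ≠ 0 := by exact_mod_cast hABr.ne'
  have hBBc : ((rk:ℂ) + rkp) ≠ 0 := by exact_mod_cast hBBr.ne'
  have hrkmC : (rkm:ℂ) = ((zk:ℂ) - zkm) ^ 2 / (4 * rk) := by
    rw [eq_div_iff (by exact_mod_cast (by positivity : (4*rk:ℝ) ≠ 0))]
    exact_mod_cast (by linarith [ht1] : rkm * (4*rk) = (zk - zkm)^2)
  have hrkpC : (rkp:ℂ) = ((zkp:ℂ) - zk) ^ 2 / (4 * rk) := by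
    rw [eq_div_iff (by exact_mod_cast (by positivity : (4*rk:ℝ) ≠ 0))]
    exact_mod_cast (by linarith [ht2] : rkp * (4*rk) = (zkp - zk)^2)
  -- denominator factors nonzero
  have g1 : ((zkm:ℂ) - wkm) * ((rkm:ℂ) + rk) =
      (rkm:ℂ) * ((zkm:ℂ) - zk) - 2 * I * rkm * rk := by
    rw [hwkm]; field_simp; ring
  have g1ne : ((rkm:ℂ) * ((zkm:ℂ) - zk) - 2 * I * rkm * rk) ≠ 0 := by
    intro h0
    have him := congrArg Complex.im h0
    simp at him
    rcases him with h | h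
    · exact hrkm.ne' h
    · exact hrk.ne' h
  have f1 : ((zkm:ℂ) - wkm) ≠ 0 := by
    have := g1 ▸ g1ne
    exact (mul_ne_zero_iff.mp this).1
  have g2 : (wk - (zk:ℂ)) * ((rk:ℂ) + rkp) =
      (rk:ℂ) * ((zkp:ℂ) - zk) + 2 * I * rk * rkp := by
    rw [hwk]; field_simp; ring
  have g2ne : ((rk:ℂ) * ((zkp:ℂ) - zk) + 2 * I * rk * rkp) ≠ 0 := by
    intro h0
    have him := congrArg Complex.im h0
    simp at him
    rcases him with h | h
    · exact hrk.ne' h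
    · exact hrkp.ne' h
  have f2 : (wk - (zk:ℂ)) ≠ 0 := by
    have := g2 ▸ g2ne
    exact (mul_ne_zero_iff.mp this).1
  have g3 : (wkm - wk) * (((rkm:ℂ) + rk) * ((rk:ℂ) + rkp)) =
      ((rk:ℂ) * zkm + (rkm:ℂ) * zk + 2 * I * rkm * rk) * ((rk:ℂ) + rkp) -
        ((rkp:ℂ) * zk + (rk:ℂ) * zkp + 2 * I * rk * rkp) * ((rkm:ℂ) + rk) := by
    rw [hwkm, hwk]; field_simp
  have e1 : (zkm:ℂ) - wkm = ((rkm:ℂ) * ((zkm:ℂ) - zk) - 2 * I * rkm * rk) /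
      ((rkm:ℂ) + rk) := eq_div_of_mul_eq hABc g1
  have e2 : wk - (zk:ℂ) = ((rk:ℂ) * ((zkp:ℂ) - zk) + 2 * I * rk * rkp) /
      ((rk:ℂ) + rkp) := eq_div_of_mul_eq hBBc g2
  have e3 : wkm - wk = (((rk:ℂ) * zkm + (rkm:ℂ) * zk + 2 * I * rkm * rk) * ((rk:ℂ) + rkp) -
        ((rkp:ℂ) * zk + (rk:ℂ) * zkp + 2 * I * rk * rkp) * ((rkm:ℂ) + rk)) /
      (((rkm:ℂ) + rk) * ((rk:ℂ) + rkp)) :=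
    eq_div_of_mul_eq (mul_ne_zero hABc hBBc) g3
  have key : s = -(t:ℂ) * I := by
    rw [hs, e3, e1, e2, hT]
    push_cast
    field_simp
    rw [div_eq_iff (by
      refine mul_ne_zero (mul_ne_zero (by exact_mod_cast hrkm.ne') ?_) ?_ <;> intro h0 <;>
        have h0i := congrArg Complex.im h0 <;> simp [hrk.ne', hrkp.ne'] at h0i)]
    rw [hrkmC, hrkpC]
    field_simp
    have hI2 : (I:ℂ) ^ 2 = -1 := Complex.I_sq
    have hI3 : (I:ℂ) ^ 3 = -I := by rw [pow_succ, hI2]; ring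
    have hI4 : (I:ℂ) ^ 4 = 1 := by rw [pow_succ, hI3]; simp [Complex.I_mul_I]
    ring_nf
    simp only [hI2, hI3, hI4]
    ring
  refine ⟨?_, ?_, ?_⟩
  · rw [key]; simp
  · rw [key]; simpa using htpos
  · rw [key]
    simp only [ne_eq, neg_mul, neg_eq_zero, mul_eq_zero, I_ne_zero, or_false]
    exact_mod_cast htpos.ne'
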